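/- Let A ∈ ℝ^{n×n} be row-stochastic and c, p̄ ∈ ℝ^n nonnegative. Then there is exactly one vector p satisfying the clearing fixed-point equation p = min(p̄, c + Aᵀp) (componentwise) together with the property that every strongly connected sink component of the digraph G[A] contains at least one node i with p_i = p̄_i; this vector is p* = p*[A,c,p̄], the unique minimizer over 𝒫_pr(c,p̄) = {p ∈ ℝ^n : 0 ≤ p ≤ p̄, p ≤ c + Aᵀp} of any decreasing function f : [0,p̄] → ℝ. -/

import Mathlib

open Matrix Finset

/-- The polytope `𝒫_pr(c, p̄)` of feasible payment vectors under the pro-rata rule: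
`0 ≤ p ≤ p̄` and `p ≤ c + Aᵀp`. -/
def FeasibleVec (n : ℕ) (A : Matrix (Fin n) (Fin n) ℝ) (c pbar p : Fin n → ℝ) : Prop :=
  (∀ i, 0 ≤ p i) ∧ (∀ i, p i ≤ pbar i) ∧ (∀ i, p i ≤ c i + Aᵀ.mulVec p i)

/-- A function `f : [0, p̄] → ℝ` is decreasing: `p ≤ q` with `p ≠ q` implies `f q < f p`. -/
def DecreasingOn (n : ℕ) (pbar : Fin n → ℝ) (f : (Fin n → ℝ) → ℝ) : Prop :=
  ∀ p q : Fin n → ℝ, (∀ i, 0 ≤ p i) → (∀ i, p i ≤ q i) → (∀ i, q i ≤ pbar i) →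
    p ≠ q → f q < f p

/-- Reachability in the weighted digraph `G[A]`, which has an arc `i → j` iff `A i j > 0`. -/
def Reach {n : ℕ} (A : Matrix (Fin n) (Fin n) ℝ) (i j : Fin n) : Prop :=
  Relation.ReflTransGen (fun a b => 0 < A a b) i j

/-- `V0` is a strongly connected component of `G[A]`: it is nonempty, all its nodes are
mutually reachable, and it is maximal with this property. -/
def IsSCC {n : ℕ} (A : Matrix (Fin n) (Fin n) ℝ) (V0 : Set (Fin n)) : Prop :=
  V0.Nonempty ∧ (∀ i ∈ V0, ∀ j ∈ V0, Reach A i j) ∧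
  (∀ i ∈ V0, ∀ j, Reach A i j → Reach A j i → j ∈ V0)

/-- `V0` is a sink in `G[A]`: no arc leaves it. -/
def IsSink {n : ℕ} (A : Matrix (Fin n) (Fin n) ℝ) (V0 : Set (Fin n)) : Prop :=
  ∀ i ∈ V0, ∀ j, 0 < A i j → j ∈ V0

lemma sum_eq_ptwise {n : ℕ} (g h : Fin n → ℝ) (hle : ∀ i, g i ≤ h i)
    (hs : ∑ i, h i ≤ ∑ i, g i) (i : Fin n) : g i = h i := by
  by_contra hne
  have hlt : g i < h i := (hle i).lt_of_ne hne
  have := Finset.sum_lt_sum (fun j _ => hle j) ⟨i, Finset.mem_univ i, hlt⟩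
  linarith

lemma sink_scc_of_closed {n : ℕ} (A : Matrix (Fin n) (Fin n) ℝ) (D : Set (Fin n))
    (hne : D.Nonempty) (hcl : ∀ j ∈ D, ∀ i, 0 < A j i → i ∈ D) :
    ∃ V0 : Set (Fin n), IsSCC A V0 ∧ IsSink A V0 ∧ V0 ⊆ D := by
  classical
  obtain ⟨j0, hj0⟩ := hne
  have hDreach : ∀ a b, Reach A a b → a ∈ D → b ∈ D := by
    intro a b h
    induction h with
    | refl => exact id
    | tail _ h2 ih => intro ha; exact hcl _ (ih ha) _ h2
  set S : Finset (Fin n) := univ.filter (fun k => Reach A j0 k) with hS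
  have hj0S : j0 ∈ S := by simp [hS]; exact Relation.ReflTransGen.refl
  obtain ⟨k, hkS, hkmin⟩ :=
    S.exists_min_image (fun k => (univ.filter (fun m => Reach A k m)).card) ⟨j0, hj0S⟩
  have hkR : Reach A j0 k := by simpa [hS] using hkS
  have hkD : k ∈ D := hDreach _ _ hkR hj0
  have hback : ∀ m, Reach A k m → Reach A m k := by
    intro m hm
    by_contra hmk
    have hmS : m ∈ S := by
      simp only [hS, mem_filter, mem_univ, true_and]
      exact hkR.trans hm
    have hsub : univ.filter (fun x => Reach A m x) ⊂ univ.filter (fun x => Reach A k x) := by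
      constructor
      · intro x hx
        simp only [mem_filter, mem_univ, true_and] at hx ⊢
        exact hm.trans hx
      · intro hcontra
        have hk : k ∈ univ.filter (fun x => Reach A m x) := by
          apply hcontra
          simp only [mem_filter, mem_univ, true_and]
          exact Relation.ReflTransGen.refl
        simp only [mem_filter] at hk
        exact hmk hk.2
    have h1 := Finset.card_lt_card hsub
    have h2 := hkmin m hmS
    omega
  refine ⟨{m | Reach A k m ∧ Reach A m k}, ⟨⟨k, ?_, ?_⟩, ?_, ?_⟩, ?_, ?_⟩
  · exact Relation.ReflTransGen.refl
  · exact Relation.ReflTransGen.refl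
  · intro i hi j hj
    exact hi.2.trans hj.1
  · intro i hi j rij rji
    exact ⟨hi.1.trans rij, rji.trans hi.2⟩
  · intro i hi j hij
    have rkj : Reach A k j := hi.1.tail hij
    exact ⟨rkj, hback j rkj⟩
  · intro m hm
    exact hDreach _ _ hm.1 hkD

lemma exists_sink_vector {n : ℕ} (A : Matrix (Fin n) (Fin n) ℝ)
    (hA0 : ∀ i j, 0 ≤ A i j) (hA1 : ∀ i, ∑ j, A i j = 1)
    (V0 : Set (Fin n)) (hne : V0.Nonempty) (hsink : IsSink A V0) :
    ∃ w : Fin n → ℝ, (∀ i, 0 ≤ w i) ∧ (∀ i, i ∉ V0 → w i = 0) ∧ (∃ i, 0 < w i) ∧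
      (∀ i ∈ V0, w i ≤ ∑ j, A j i * w j) := by
  classical
  haveI : Fintype ↥V0 := (Set.toFinite V0).fintype
  haveI : Nonempty ↥V0 := hne.to_subtype
  have hzero : ∀ (x : ↥V0) (j : Fin n), j ∉ V0 → A ↑x j = 0 := by
    intro x j hj
    by_contra h
    exact hj (hsink _ x.2 j ((hA0 _ _).lt_of_ne (Ne.symm h)))
  have hsum : ∀ g : Fin n → ℝ, (∀ j, j ∉ V0 → g j = 0) → ∑ y : ↥V0, g ↑y = ∑ j, g j := by
    intro g hg
    rw [← Finset.sum_subtype ((Set.toFinite V0).toFinset)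
        (fun x => (Set.toFinite V0).mem_toFinset) g]
    apply Finset.sum_subset (Finset.subset_univ _)
    intro j _ hj
    exact hg j (by simpa [(Set.toFinite V0).mem_toFinset] using hj)
  set B : Matrix ↥V0 ↥V0 ℝ := Matrix.of (fun x y : ↥V0 => A ↑x ↑y) with hB
  have hrow : ∀ x : ↥V0, ∑ y, B x y = 1 := by
    intro x
    have := hsum (fun j => A ↑x j) (hzero x)
    simpa [hB, hA1] using this
  have h1 : (B - 1) *ᵥ (fun _ => (1 : ℝ)) = 0 := by
    funext x
    simp only [Matrix.mulVec, dotProduct, Matrix.sub_apply, mul_one, Pi.zero_apply,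
      Finset.sum_sub_distrib]
    rw [hrow x]
    simp [Matrix.one_apply]
  have hdet : (B - 1).det = 0 := by
    apply Matrix.exists_mulVec_eq_zero_iff.mp
    refine ⟨fun _ => 1, ?_, h1⟩
    intro h
    have := congrFun h (Classical.arbitrary ↥V0)
    norm_num at this
  have hdetT : (Bᵀ - 1).det = 0 := by
    have : Bᵀ - 1 = (B - 1)ᵀ := by rw [Matrix.transpose_sub, Matrix.transpose_one]
    rw [this, Matrix.det_transpose]
    exact hdet
  obtain ⟨v, hv0, hv⟩ := Matrix.exists_mulVec_eq_zero_iff.mpr hdetT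
  have hfix : ∀ x : ↥V0, ∑ y : ↥V0, A ↑y ↑x * v y = v x := by
    intro x
    have hx := congrFun hv x
    simp only [Matrix.mulVec, dotProduct, Matrix.sub_apply, Matrix.transpose_apply,
      sub_mul, Finset.sum_sub_distrib, Pi.zero_apply] at hx
    have hone : ∑ y : ↥V0, (1 : Matrix ↥V0 ↥V0 ℝ) x y * v y = v x := by
      simp [Matrix.one_apply]
    rw [hone] at hx
    have h2 : ∑ y : ↥V0, B y x * v y = v x := by linarith
    simpa [hB] using h2
  refine ⟨fun i => if h : i ∈ V0 then |v ⟨i, h⟩| else 0, ?_, ?_, ?_, ?_⟩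
  · intro i; by_cases h : i ∈ V0 <;> simp [h, abs_nonneg]
  · intro i hi; simp [hi]
  · obtain ⟨x, hx⟩ := Function.ne_iff.mp hv0
    refine ⟨↑x, ?_⟩
    simp only [x.2, dif_pos, Subtype.coe_eta]
    exact abs_pos.mpr hx
  · intro i hi
    have key : |v ⟨i, hi⟩| ≤ ∑ y : ↥V0, A ↑y i * |v y| := by
      rw [← hfix ⟨i, hi⟩]
      refine le_trans (Finset.abs_sum_le_sum_abs _ _) ?_
      apply Finset.sum_le_sum
      intro y _
      rw [abs_mul, abs_of_nonneg (hA0 _ _)]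
    have hext : ∑ y : ↥V0, A ↑y i * |v y|
        = ∑ j, A j i * (if h : j ∈ V0 then |v ⟨j, h⟩| else 0) := by
      rw [← hsum (fun j => A j i * (if h : j ∈ V0 then |v ⟨j, h⟩| else 0))
          (fun j hj => by simp [hj])]
      apply Finset.sum_congr rfl
      intro y _
      simp [y.2, Subtype.coe_eta]
    simp only [hi, dif_pos]
    calc |v ⟨i, hi⟩| ≤ ∑ y : ↥V0, A ↑y i * |v y| := key
      _ = _ := hext

/-- There is exactly one vector satisfying the clearing fixed-point equation
`p = min(p̄, c + Aᵀp)` together with the property that every strongly connected sink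
component of `G[A]` contains a node paying its liability in full; this vector is the
minimizer `p*` over `𝒫_pr(c, p̄)` of any decreasing function. -/
theorem prorata_unique_clearing_with_sink_property (n : ℕ) (hn : 1 ≤ n)
    (A : Matrix (Fin n) (Fin n) ℝ) (hA0 : ∀ i j, 0 ≤ A i j) (hA1 : ∀ i, ∑ j, A i j = 1)
    (c pbar : Fin n → ℝ) (hc : ∀ i, 0 ≤ c i) (hpbar : ∀ i, 0 ≤ pbar i)
    (f : (Fin n → ℝ) → ℝ) (hf : DecreasingOn n pbar f)
    (pstar : Fin n → ℝ) (hfeas : FeasibleVec n A c pbar pstar)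
    (hmin : ∀ q, FeasibleVec n A c pbar q → f pstar ≤ f q) :
    ((∀ i, pstar i = min (pbar i) (c i + Aᵀ.mulVec pstar i)) ∧
      (∀ V0 : Set (Fin n), IsSCC A V0 → IsSink A V0 → ∃ i ∈ V0, pstar i = pbar i)) ∧
    (∀ q : Fin n → ℝ,
      (∀ i, q i = min (pbar i) (c i + Aᵀ.mulVec q i)) →
      (∀ V0 : Set (Fin n), IsSCC A V0 → IsSink A V0 → ∃ i ∈ V0, q i = pbar i) →
      q = pstar) := by
  classical
  obtain ⟨hpos, hple, hpfe⟩ := hfeas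
  -- transpose mulVec as a sum
  have hT : ∀ (p : Fin n → ℝ) (i : Fin n), Aᵀ.mulVec p i = ∑ j, A j i * p j := by
    intro p i
    simp [Matrix.mulVec, dotProduct, Matrix.transpose_apply]
  have hmono : ∀ p q : Fin n → ℝ, (∀ j, p j ≤ q j) → ∀ i, Aᵀ.mulVec p i ≤ Aᵀ.mulVec q i := by
    intro p q h i
    rw [hT, hT]
    exact Finset.sum_le_sum fun j _ => mul_le_mul_of_nonneg_left (h j) (hA0 j i)
  -- pstar dominates any feasible q from above (push property)
  have hpush : ∀ q, FeasibleVec n A c pbar q → (∀ i, pstar i ≤ q i) → ∀ i, q i = pstar i := by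
    intro q hq hle i
    by_contra hne
    have hne' : pstar ≠ q := fun h => hne (congrFun h i).symm
    have := hf pstar q hpos hle hq.2.1 hne'
    have := hmin q hq
    linarith
  -- pstar is the greatest feasible point
  have hmax : ∀ q, FeasibleVec n A c pbar q → ∀ i, q i ≤ pstar i := by
    intro q hq i
    set r : Fin n → ℝ := fun j => max (q j) (pstar j) with hr
    have hrfeas : FeasibleVec n A c pbar r := by
      refine ⟨fun j => le_trans (hpos j) (le_max_right _ _), fun j => max_le (hq.2.1 j) (hple j), ?_⟩
      intro j
      rcases max_cases (q j) (pstar j) with ⟨h1, _⟩ | ⟨h1, _⟩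
      · rw [hr]; simp only [h1]
        exact le_trans (hq.2.2 j) (add_le_add_right (hmono q r (fun k => le_max_left _ _) j) _)
      · rw [hr]; simp only [h1]
        exact le_trans (hpfe j) (add_le_add_right (hmono pstar r (fun k => le_max_right _ _) j) _)
    have := hpush r hrfeas (fun j => le_max_right _ _) i
    rw [hr] at this
    simp only at this
    calc q i ≤ max (q i) (pstar i) := le_max_left _ _
      _ = pstar i := this
  -- Part 1a: fixed-point equation for pstar
  have hfp : ∀ i, pstar i = min (pbar i) (c i + Aᵀ.mulVec pstar i) := by
    intro i
    refine le_antisymm (le_min (hple i) (hpfe i)) ?_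
    by_contra hlt
    push_neg at hlt
    set m := min (pbar i) (c i + Aᵀ.mulVec pstar i) with hm
    set q : Fin n → ℝ := Function.update pstar i m with hq
    have hple' : ∀ j, pstar j ≤ q j := by
      intro j
      rcases eq_or_ne j i with rfl | hji
      · rw [hq]; simp; exact le_of_lt hlt
      · rw [hq]; simp [Function.update_apply, hji]
    have hqfeas : FeasibleVec n A c pbar q := by
      refine ⟨fun j => le_trans (hpos j) (hple' j), ?_, ?_⟩
      · intro j
        rcases eq_or_ne j i with rfl | hji
        · rw [hq]; simp [hm]
        · rw [hq]; simp [Function.update_apply, hji, hple j]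
      · intro j
        have hmv := hmono pstar q hple' j
        rcases eq_or_ne j i with rfl | hji
        · rw [hq]; simp only [Function.update_self]
          calc m ≤ c j + Aᵀ.mulVec pstar j := min_le_right _ _
            _ ≤ c j + Aᵀ.mulVec q j := add_le_add_right hmv _
        · rw [hq]; simp only [Function.update_apply, hji, if_false]
          calc pstar j ≤ c j + Aᵀ.mulVec pstar j := hpfe j
            _ ≤ c j + Aᵀ.mulVec q j := add_le_add_right hmv _
    have := hpush q hqfeas hple' i
    rw [hq] at this
    simp only [Function.update_self] at this
    exact absurd this (ne_of_gt hlt)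
  -- Part 1b: sink property for pstar
  have hsinkstar : ∀ V0 : Set (Fin n), IsSCC A V0 → IsSink A V0 → ∃ i ∈ V0, pstar i = pbar i := by
    intro V0 hscc hsink
    by_contra hcon
    push_neg at hcon
    have hlt : ∀ i ∈ V0, pstar i < pbar i := fun i hi => (hple i).lt_of_ne (hcon i hi)
    have heq : ∀ i ∈ V0, pstar i = c i + Aᵀ.mulVec pstar i := by
      intro i hi
      have h := hfp i
      rcases min_cases (pbar i) (c i + Aᵀ.mulVec pstar i) with ⟨h1, _⟩ | ⟨h1, _⟩
      · exact absurd (h.trans h1) (ne_of_lt (hlt i hi))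
      · exact h.trans h1
    obtain ⟨w, hw0, hwz, ⟨i0, hi0⟩, hwfix⟩ := exists_sink_vector A hA0 hA1 V0 hscc.1 hsink
    have hi0V : i0 ∈ V0 := by
      by_contra h
      rw [hwz i0 h] at hi0
      exact lt_irrefl 0 hi0
    -- choose a small ε > 0
    set T : Finset (Fin n) := univ.filter (fun i => i ∈ V0) with hTdef
    have hTne : T.Nonempty := ⟨i0, by simp [hTdef, hi0V]⟩
    set δ : ℝ := T.inf' hTne (fun i => pbar i - pstar i) with hδ
    have hδpos : 0 < δ := by
      rw [hδ, Finset.lt_inf'_iff]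
      intro i hiT
      have : i ∈ V0 := by simpa [hTdef] using hiT
      linarith [hlt i this]
    set M : ℝ := 1 + ∑ j, w j with hM
    have hMpos : (0:ℝ) < M := by
      rw [hM]
      have : 0 ≤ ∑ j, w j := Finset.sum_nonneg fun j _ => hw0 j
      linarith
    have hwM : ∀ i, w i ≤ M := by
      intro i
      rw [hM]
      have := Finset.single_le_sum (fun j (_ : j ∈ univ) => hw0 j) (Finset.mem_univ i)
      linarith
    set ε : ℝ := δ / M with hε
    have hεpos : 0 < ε := div_pos hδpos hMpos
    have hεw : ∀ i ∈ V0, ε * w i ≤ δ := by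
      intro i hi
      calc ε * w i ≤ ε * M := mul_le_mul_of_nonneg_left (hwM i) (le_of_lt hεpos)
        _ = δ := by rw [hε]; field_simp
    set q : Fin n → ℝ := fun i => pstar i + ε * w i with hqdef
    have hple' : ∀ i, pstar i ≤ q i := by
      intro i
      rw [hqdef]
      have : 0 ≤ ε * w i := mul_nonneg (le_of_lt hεpos) (hw0 i)
      simp only
      linarith
    have hmv : ∀ i, Aᵀ.mulVec q i = Aᵀ.mulVec pstar i + ε * ∑ j, A j i * w j := by
      intro i
      rw [hT, hT, Finset.mul_sum, ← Finset.sum_add_distrib]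
      apply Finset.sum_congr rfl
      intro j _
      rw [hqdef]
      ring
    have hqfeas : FeasibleVec n A c pbar q := by
      refine ⟨fun i => le_trans (hpos i) (hple' i), ?_, ?_⟩
      · intro i
        by_cases hi : i ∈ V0
        · have h1 : ε * w i ≤ δ := hεw i hi
          have h2 : δ ≤ pbar i - pstar i := by
            rw [hδ]
            exact Finset.inf'_le _ (by simp [hTdef, hi])
          rw [hqdef]; simp only; linarith
        · rw [hqdef]; simp only [hwz i hi, mul_zero, add_zero]; exact hple i
      · intro i
        rw [hmv i]
        by_cases hi : i ∈ V0
        · have h1 := hwfix i hi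
          have h2 := heq i hi
          rw [hqdef]; simp only
          have : ε * w i ≤ ε * ∑ j, A j i * w j :=
            mul_le_mul_of_nonneg_left h1 (le_of_lt hεpos)
          linarith
        · rw [hqdef]; simp only [hwz i hi, mul_zero, add_zero]
          have h3 : 0 ≤ ε * ∑ j, A j i * w j :=
            mul_nonneg (le_of_lt hεpos) (Finset.sum_nonneg fun j _ =>
              mul_nonneg (hA0 j i) (hw0 j))
          linarith [hpfe i]
    have := hpush q hqfeas hple' i0
    rw [hqdef] at this
    simp only at this
    have : ε * w i0 = 0 := by linarith
    have := mul_pos hεpos hi0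
    linarith
  refine ⟨⟨hfp, hsinkstar⟩, ?_⟩
  -- Part 2: uniqueness
  intro q hqfix hqsink
  have hqle : ∀ i, q i ≤ pbar i := fun i => (hqfix i) ▸ min_le_left _ _
  have hqfe : ∀ i, q i ≤ c i + Aᵀ.mulVec q i := fun i => (hqfix i) ▸ min_le_right _ _
  have hmin_eq : ∀ (a b x : ℝ), x = min a b → x < a → x = b := by
    intro a b x h hx
    rcases min_cases a b with ⟨h1, _⟩ | ⟨h1, _⟩
    · exact absurd (h.trans h1) (ne_of_lt hx)
    · exact h.trans h1
  -- Step 1: pstar ≤ q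
  have hstep1 : ∀ i, pstar i ≤ q i := by
    by_contra hcon
    push_neg at hcon
    obtain ⟨i1, hi1⟩ := hcon
    set d : Fin n → ℝ := fun i => max (pstar i - q i) 0 with hd
    have hd0 : ∀ i, 0 ≤ d i := fun i => le_max_right _ _
    have hdle : ∀ i, d i ≤ ∑ j, A j i * d j := by
      intro i
      by_cases hlt : q i < pstar i
      · have hqb : q i < pbar i := lt_of_lt_of_le hlt (hple i)
        have hq : q i = c i + Aᵀ.mulVec q i := hmin_eq _ _ _ (hqfix i) hqb
        have hps : pstar i ≤ c i + Aᵀ.mulVec pstar i := hpfe i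
        have h1 : d i = pstar i - q i := max_eq_left (by linarith)
        have h2 : pstar i - q i ≤ Aᵀ.mulVec pstar i - Aᵀ.mulVec q i := by linarith
        have h3 : Aᵀ.mulVec pstar i - Aᵀ.mulVec q i = ∑ j, A j i * (pstar j - q j) := by
          rw [hT, hT, ← Finset.sum_sub_distrib]
          apply Finset.sum_congr rfl
          intro j _
          ring
        have h4 : ∑ j, A j i * (pstar j - q j) ≤ ∑ j, A j i * d j :=
          Finset.sum_le_sum fun j _ =>
            mul_le_mul_of_nonneg_left (le_max_left _ _) (hA0 j i)
        rw [h1]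
        linarith
      · have h1 : d i = 0 := max_eq_right (by push_neg at hlt; linarith)
        rw [h1]
        exact Finset.sum_nonneg fun j _ => mul_nonneg (hA0 j i) (hd0 j)
    have hsums : ∑ i, (∑ j, A j i * d j) ≤ ∑ i, d i := by
      rw [Finset.sum_comm]
      apply le_of_eq
      apply Finset.sum_congr rfl
      intro j _
      rw [← Finset.sum_mul, hA1 j, one_mul]
    have hdeq : ∀ i, d i = ∑ j, A j i * d j :=
      sum_eq_ptwise d (fun i => ∑ j, A j i * d j) hdle hsums
    set D : Set (Fin n) := {i | q i < pstar i} with hD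
    have hdpos : ∀ i, i ∈ D ↔ 0 < d i := by
      intro i
      constructor
      · intro hi
        have : q i < pstar i := hi
        rw [hd]; simp only
        rw [max_eq_left (by linarith)]
        linarith
      · intro hi
        by_contra h
        have : pstar i ≤ q i := le_of_not_gt h
        rw [hd] at hi; simp only at hi
        rw [max_eq_right (by linarith)] at hi
        exact lt_irrefl 0 hi
    have hDcl : ∀ j ∈ D, ∀ i, 0 < A j i → i ∈ D := by
      intro j hj i hij
      rw [hdpos]
      by_contra h
      push_neg at h
      have hdi : d i = 0 := le_antisymm h (hd0 i)
      have h0 : ∑ k, A k i * d k = 0 := by rw [← hdeq i, hdi]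
      have := (Finset.sum_eq_zero_iff_of_nonneg
        (fun k (_ : k ∈ univ) => mul_nonneg (hA0 k i) (hd0 k))).mp h0 j (Finset.mem_univ j)
      have hdj : 0 < d j := (hdpos j).mp hj
      nlinarith
    obtain ⟨V0, hscc, hsink, hsub⟩ := sink_scc_of_closed A D ⟨i1, hi1⟩ hDcl
    obtain ⟨i, hiV, hiq⟩ := hqsink V0 hscc hsink
    have : q i < pstar i := hsub hiV
    have := hple i
    linarith [hiq ▸ this]
  -- Step 2: q ≤ pstar
  have hstep2 : ∀ i, q i ≤ pstar i := by
    by_contra hcon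
    push_neg at hcon
    obtain ⟨i1, hi1⟩ := hcon
    set e : Fin n → ℝ := fun i => max (q i - pstar i) 0 with he
    have he0 : ∀ i, 0 ≤ e i := fun i => le_max_right _ _
    have hele : ∀ i, e i ≤ ∑ j, A j i * e j := by
      intro i
      by_cases hlt : pstar i < q i
      · have hpb : pstar i < pbar i := lt_of_lt_of_le hlt (hqle i)
        have hps : pstar i = c i + Aᵀ.mulVec pstar i := hmin_eq _ _ _ (hfp i) hpb
        have hq : q i ≤ c i + Aᵀ.mulVec q i := hqfe i
        have h1 : e i = q i - pstar i := max_eq_left (by linarith)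
        have h2 : q i - pstar i ≤ Aᵀ.mulVec q i - Aᵀ.mulVec pstar i := by linarith
        have h3 : Aᵀ.mulVec q i - Aᵀ.mulVec pstar i = ∑ j, A j i * (q j - pstar j) := by
          rw [hT, hT, ← Finset.sum_sub_distrib]
          apply Finset.sum_congr rfl
          intro j _
          ring
        have h4 : ∑ j, A j i * (q j - pstar j) ≤ ∑ j, A j i * e j :=
          Finset.sum_le_sum fun j _ =>
            mul_le_mul_of_nonneg_left (le_max_left _ _) (hA0 j i)
        rw [h1]
        linarith
      · have h1 : e i = 0 := max_eq_right (by push_neg at hlt; linarith)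
        rw [h1]
        exact Finset.sum_nonneg fun j _ => mul_nonneg (hA0 j i) (he0 j)
    have hsums : ∑ i, (∑ j, A j i * e j) ≤ ∑ i, e i := by
      rw [Finset.sum_comm]
      apply le_of_eq
      apply Finset.sum_congr rfl
      intro j _
      rw [← Finset.sum_mul, hA1 j, one_mul]
    have heeq : ∀ i, e i = ∑ j, A j i * e j :=
      sum_eq_ptwise e (fun i => ∑ j, A j i * e j) hele hsums
    set E : Set (Fin n) := {i | pstar i < q i} with hE
    have hepos : ∀ i, i ∈ E ↔ 0 < e i := by
      intro i
      constructor
      · intro hi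
        have : pstar i < q i := hi
        rw [he]; simp only
        rw [max_eq_left (by linarith)]
        linarith
      · intro hi
        by_contra h
        have : q i ≤ pstar i := le_of_not_gt h
        rw [he] at hi; simp only at hi
        rw [max_eq_right (by linarith)] at hi
        exact lt_irrefl 0 hi
    have hEcl : ∀ j ∈ E, ∀ i, 0 < A j i → i ∈ E := by
      intro j hj i hij
      rw [hepos]
      by_contra h
      push_neg at h
      have hei : e i = 0 := le_antisymm h (he0 i)
      have h0 : ∑ k, A k i * e k = 0 := by rw [← heeq i, hei]
      have := (Finset.sum_eq_zero_iff_of_nonneg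
        (fun k (_ : k ∈ univ) => mul_nonneg (hA0 k i) (he0 k))).mp h0 j (Finset.mem_univ j)
      have hej : 0 < e j := (hepos j).mp hj
      nlinarith
    obtain ⟨V0, hscc, hsink, hsub⟩ := sink_scc_of_closed A E ⟨i1, hi1⟩ hEcl
    obtain ⟨i, hiV, hip⟩ := hsinkstar V0 hscc hsink
    have h5 : pstar i < q i := hsub hiV
    have h6 := hqle i
    rw [hip] at h5
    linarith
  funext i
  exact le_antisymm (hstep2 i) (hstep1 i)
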